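/- Let X and Y be graphs on [n] with n ≥ 2, and let v be a vertex of X of degree 1 with unique neighbor u. Suppose that for every label l ∈ [n], the friends-and-strangers graph FS(X − v, Y − l) is connected, and suppose that for every l ∈ [n] there exists l' ≠ l with {l,l'} ∈ E(Y). Then FS(X,Y) is connected. -/
import Mathlib


open SimpleGraph

/-- The friends-and-strangers graph of `X` and `Y`: vertices are bijections `σ : V ≃ W`,
and `σ, φ` are adjacent iff there is an edge `{a,b}` of `X` with `{σ a, σ b}` an edge of `Y`
such that `φ` is obtained from `σ` by swapping the values at `a` and `b`. -/
def FS {V W : Type*} [DecidableEq V] (X : SimpleGraph V) (Y : SimpleGraph W) : SimpleGraph (V ≃ W) :=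
  SimpleGraph.fromRel (fun σ φ =>
    ∃ a b : V, X.Adj a b ∧ Y.Adj (σ a) (σ b) ∧ φ = (Equiv.swap a b).trans σ)

/-- `m` is the first vertex (0-indexed) of one of the legs of the spider with leg
lengths `L`, i.e. `m` is the sum of a proper prefix of `L`. -/
def legStart (L : List ℕ) (m : ℕ) : Prop :=
  ∃ t : List ℕ, t <+: L ∧ t ≠ L ∧ t.sum = m

/-- The spider graph on `Fin n` (intended for `n = L.sum + 1`) with leg lengths given by the
list `L`: vertex `n-1` is the center, and the legs occupy consecutive blocks of vertices. -/
def Spider (n : ℕ) (L : List ℕ) : SimpleGraph (Fin n) :=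
  SimpleGraph.fromRel (fun i j =>
    ((j : ℕ) = n - 1 ∧ legStart L (i : ℕ)) ∨
    ((j : ℕ) = (i : ℕ) + 1 ∧ ¬ legStart L ((i : ℕ) + 1) ∧ (i : ℕ) + 1 < n - 1))

/-- The tadpole graph on `Fin n`: a cycle on vertices `0, …, c-1` together with the
path `c-1, c, …, n-1` (0-indexed version of: edges `{k,k+1}` plus `{1,c}`). -/
def Tadpole (n c : ℕ) : SimpleGraph (Fin n) :=
  SimpleGraph.fromRel (fun i j =>
    (j : ℕ) = (i : ℕ) + 1 ∨ ((i : ℕ) = 0 ∧ (j : ℕ) = c - 1))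

/-- The path graph on `n` vertices. -/
def PathG (n : ℕ) : SimpleGraph (Fin n) :=
  SimpleGraph.fromRel (fun i j => (j : ℕ) = (i : ℕ) + 1)

/-- The cycle graph on `n` vertices. -/
def CycleG (n : ℕ) : SimpleGraph (Fin n) :=
  SimpleGraph.fromRel (fun i j =>
    (j : ℕ) = (i : ℕ) + 1 ∨ ((i : ℕ) = 0 ∧ (j : ℕ) = n - 1))

lemma FS_adj_iff {V W : Type*} [DecidableEq V] (X : SimpleGraph V) (Y : SimpleGraph W)
    (σ φ : V ≃ W) :
    (FS X Y).Adj σ φ ↔ ∃ a b : V, X.Adj a b ∧ Y.Adj (σ a) (σ b) ∧ φ = (Equiv.swap a b).trans σ := by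
  constructor
  · rintro ⟨hne, h | h⟩
    · exact h
    · obtain ⟨a, b, hX, hY, hσ⟩ := h
      refine ⟨a, b, hX, ?_, ?_⟩
      · have ha : σ a = φ b := by rw [hσ]; simp
        have hb : σ b = φ a := by rw [hσ]; simp
        rw [ha, hb]; exact hY.symm
      · rw [hσ]; ext x; simp
  · rintro ⟨a, b, hX, hY, hσ⟩
    refine ⟨?_, Or.inl ⟨a, b, hX, hY, hσ⟩⟩
    intro hc
    have : φ a = σ b := by rw [hσ]; simp
    rw [← hc] at this
    exact hY.ne (by rw [this])

lemma FS_comp_invariant {V W : Type*} [DecidableEq V] {X : SimpleGraph V} {Y : SimpleGraph W}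
    {σ φ : V ≃ W} (h : (FS X Y).Reachable σ φ) (x : V) :
    Y.connectedComponentMk (σ x) = Y.connectedComponentMk (φ x) := by
  obtain ⟨p⟩ := h
  induction p with
  | nil => rfl
  | cons hadj p ih =>
    rename_i σ' ψ φ'
    obtain ⟨a, b, hX, hY, hψ⟩ := (FS_adj_iff _ _ _ _).mp hadj
    refine Eq.trans ?_ ih
    rw [hψ]
    simp only [Equiv.trans_apply]
    rcases eq_or_ne x a with rfl | hxa
    · simp only [Equiv.swap_apply_left]
      exact ConnectedComponent.sound hY.reachable
    · rcases eq_or_ne x b with rfl | hxb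
      · simp only [Equiv.swap_apply_right]
        exact ConnectedComponent.sound hY.symm.reachable
      · rw [Equiv.swap_apply_of_ne_of_ne hxa hxb]

lemma preconnected_of_FS_connected {V W : Type*} [DecidableEq V] [DecidableEq W]
    {X : SimpleGraph V} {Y : SimpleGraph W} (h : (FS X Y).Connected) : Y.Preconnected := by
  intro w1 w2
  obtain ⟨σ⟩ : Nonempty (V ≃ W) := h.nonempty
  have hr := h.preconnected σ (σ.trans (Equiv.swap w1 w2))
  have key := FS_comp_invariant hr (σ.symm w1)
  simp only [Equiv.trans_apply, Equiv.apply_symm_apply, Equiv.swap_apply_left] at key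
  exact (ConnectedComponent.eq).mp key

lemma swap_subtype_val {α : Type*} [DecidableEq α] {p : α → Prop} (a b x : Subtype p) :
    (Equiv.swap a b x : α) = Equiv.swap (a : α) (b : α) (x : α) := by
  rcases eq_or_ne x a with rfl | h1
  · simp
  · rcases eq_or_ne x b with rfl | h2
    · simp
    · rw [Equiv.swap_apply_of_ne_of_ne h1 h2,
        Equiv.swap_apply_of_ne_of_ne (fun hc => h1 (Subtype.ext hc))
          (fun hc => h2 (Subtype.ext hc))]

/-- Extend an equivalence between the complements of `v` and `l` to all of `Fin n`. -/
def pext {n : ℕ} (v l : Fin n)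
    (e : ({w : Fin n | w ≠ v} : Set (Fin n)) ≃ ({w : Fin n | w ≠ l} : Set (Fin n))) :
    Fin n ≃ Fin n where
  toFun x := if h : x = v then l else (e ⟨x, h⟩ : Fin n)
  invFun y := if h : y = l then v else (e.symm ⟨y, h⟩ : Fin n)
  left_inv x := by
    rcases eq_or_ne x v with rfl | h
    · simp
    · simp only [dif_neg h]
      rw [dif_neg (e ⟨x, h⟩).2, Equiv.symm_apply_apply]
  right_inv y := by
    rcases eq_or_ne y l with rfl | h
    · simp
    · simp only [dif_neg h]
      rw [dif_neg (e.symm ⟨y, h⟩).2, Equiv.apply_symm_apply]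

lemma pext_apply_of_ne {n : ℕ} (v l : Fin n) (e) {x : Fin n} (h : x ≠ v) :
    pext v l e x = (e ⟨x, h⟩ : Fin n) := dif_neg h

lemma pext_apply_v {n : ℕ} (v l : Fin n) (e) : pext v l e v = l := dif_pos rfl

lemma pext_hom {n : ℕ} (v l : Fin n) (X Y : SimpleGraph (Fin n))
    {e f : ({w : Fin n | w ≠ v} : Set (Fin n)) ≃ ({w : Fin n | w ≠ l} : Set (Fin n))}
    (h : (FS (X.induce {w | w ≠ v}) (Y.induce {w | w ≠ l})).Adj e f) :
    (FS X Y).Adj (pext v l e) (pext v l f) := by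
  obtain ⟨a, b, hX, hY, hf⟩ := (FS_adj_iff _ _ _ _).mp h
  rw [FS_adj_iff]
  refine ⟨a.1, b.1, hX, ?_, ?_⟩
  · rw [pext_apply_of_ne v l e a.2, pext_apply_of_ne v l e b.2]
    exact hY
  · ext x
    simp only [Equiv.trans_apply]
    rcases eq_or_ne x v with rfl | hx
    · rw [Equiv.swap_apply_of_ne_of_ne (fun hc => a.2 hc.symm) (fun hc => b.2 hc.symm),
        pext_apply_v, pext_apply_v]
    · rw [pext_apply_of_ne v l f hx, hf]
      have hne : Equiv.swap (a : Fin n) (b : Fin n) x ≠ v := by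
        rw [← swap_subtype_val a b ⟨x, hx⟩]
        exact (Equiv.swap a b ⟨x, hx⟩).2
      rw [pext_apply_of_ne v l e hne]
      have hsub : (⟨Equiv.swap (a : Fin n) (b : Fin n) x, hne⟩ :
          ({w : Fin n | w ≠ v} : Set (Fin n))) = Equiv.swap a b ⟨x, hx⟩ :=
        Subtype.ext (swap_subtype_val a b ⟨x, hx⟩).symm
      rw [hsub]
      rfl

/-- Restrict a permutation sending `v` to `l`. -/
def pres {n : ℕ} (v l : Fin n) (σ : Fin n ≃ Fin n) (h : σ v = l) :
    ({w : Fin n | w ≠ v} : Set (Fin n)) ≃ ({w : Fin n | w ≠ l} : Set (Fin n)) where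
  toFun x := ⟨σ x, fun hc => x.2 (σ.injective (by rw [hc, h]))⟩
  invFun y := ⟨σ.symm y, fun hc => y.2 (by
    have := congrArg σ hc
    rwa [Equiv.apply_symm_apply, h] at this)⟩
  left_inv x := by simp
  right_inv y := by simp

lemma pext_pres {n : ℕ} (v l : Fin n) (σ : Fin n ≃ Fin n) (h : σ v = l) :
    pext v l (pres v l σ h) = σ := by
  ext x
  rcases eq_or_ne x v with rfl | hx
  · rw [pext_apply_v, h]
  · rw [pext_apply_of_ne v l _ hx]; rfl

/-- Pendant-vertex lemma: if `v` has degree 1 in `X` with unique neighbor `u`, every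
`FS(X - v, Y - l)` is connected, and every label has at least one friend in `Y`, then
`FS(X,Y)` is connected. -/
theorem stmt14 (n : ℕ) (hn : 2 ≤ n) (X Y : SimpleGraph (Fin n)) (v u : Fin n)
    (hv : X.neighborSet v = {u})
    (hind : ∀ l : Fin n,
      (FS (X.induce {w | w ≠ v}) (Y.induce {w | w ≠ l})).Connected)
    (hY : ∀ l : Fin n, ∃ l', Y.Adj l l') :
    (FS X Y).Connected := by
  -- the pendant edge
  have huv : X.Adj v u := by
    have : u ∈ X.neighborSet v := by rw [hv]; rfl
    exact this
  -- Lemma A: permutations with the same value at `v` are connected in FS(X,Y)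
  have lemA : ∀ (l : Fin n) (σ τ : Fin n ≃ Fin n), σ v = l → τ v = l →
      (FS X Y).Reachable σ τ := by
    intro l σ τ hσ hτ
    have hr := (hind l).preconnected (pres v l σ hσ) (pres v l τ hτ)
    have hmap := hr.map
      (⟨pext v l, fun h => pext_hom v l X Y h⟩ :
        (FS (X.induce {w | w ≠ v}) (Y.induce {w | w ≠ l})) →g FS X Y)
    have h2 : (FS X Y).Reachable (pext v l (pres v l σ hσ)) (pext v l (pres v l τ hτ)) := hmap
    rwa [pext_pres, pext_pres] at h2
  -- Y is preconnected
  have hYpre : Y.Preconnected := by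
    intro y1 y2
    rcases eq_or_ne y1 y2 with rfl | hne
    · exact Reachable.refl _
    · obtain ⟨l', hl'⟩ := hY y1
      rcases eq_or_ne l' y2 with rfl | hl2
      · exact hl'.reachable
      · have hpre : (Y.induce {w | w ≠ l'}).Preconnected :=
          preconnected_of_FS_connected (hind l')
        have r := hpre ⟨y1, hl'.ne⟩ ⟨y2, fun hc => hl2 hc.symm⟩
        exact r.map (⟨Subtype.val, fun h => h⟩ : (Y.induce {w | w ≠ l'}) →g Y)
  -- main reachability, by induction on a walk in Y from σ v to τ v
  have key : ∀ (l m : Fin n) (p : Y.Walk l m) (σ τ : Fin n ≃ Fin n),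
      σ v = l → τ v = m → (FS X Y).Reachable σ τ := by
    intro l m p
    induction p with
    | nil => intro σ τ hσ hτ; exact lemA _ σ τ hσ hτ
    | @cons l l2 m hadj p ih =>
      intro σ τ hσ hτ
      set σ'' := σ.trans (Equiv.swap (σ u) l2) with hσ''
      have hσ''v : σ'' v = l := by
        simp only [hσ'', Equiv.trans_apply, hσ]
        exact Equiv.swap_apply_of_ne_of_ne
          (fun hc => huv.ne (σ.injective (hσ.trans hc))) hadj.ne
      have hσ''u : σ'' u = l2 := by
        simp [hσ'', Equiv.trans_apply]
      have r1 : (FS X Y).Reachable σ σ'' := lemA l σ σ'' hσ hσ''v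
      set τ2 := (Equiv.swap v u).trans σ'' with hτ2
      have hadj2 : (FS X Y).Adj σ'' τ2 :=
        (FS_adj_iff _ _ _ _).mpr ⟨v, u, huv, by rw [hσ''v, hσ''u]; exact hadj, rfl⟩
      have hτ2v : τ2 v = l2 := by
        simp [hτ2, Equiv.trans_apply, hσ''u]
      exact (r1.trans hadj2.reachable).trans (ih τ2 τ hτ2v hτ)
  refine ⟨fun σ τ => ?_⟩
  obtain ⟨p⟩ := hYpre (σ v) (τ v)
  exact key _ _ p σ τ rfl rfl
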